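/- Let (V,→) be a digraph, X ⊆ A^V a pattern space with weak independence. Suppose there exists v ∈ V with superlinear connectivity (liminf_{r→∞} |B(v,r)|/r = ∞) and positive upper entropy h̄_v(X) := limsup_{r→∞} log₂|X_{B(v,r)}|/|B(v,r)| > 0. If τ : V → V is a moving subsymmetry of X (a subsymmetry with speed(v,τ) > 0 for all v), then the upper τ-entropy h̄(X,τ) := sup over finite F ⊆ V of limsup_{N→∞} (1/N) log₂|X_{∪_{n≤N} τⁿ(F)}| is infinite. -/

import Mathlib

open Filter Topology ENNReal

/-- The ball of radius `r` around `v` in the digraph `E`. -/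
def gBall {V : Type*} (E : V → V → Prop) (v : V) : ℕ → Set V
  | 0 => {v}
  | r + 1 => gBall E v r ∪ {u | ∃ w ∈ gBall E v r, E u w}

/-- The set of restrictions to `S` of elements of `X ⊆ A^V`. -/
def restrictSet {V A : Type*} (X : Set (V → A)) (S : Set V) : Set (S → A) :=
  (fun x : V → A => fun u : S => x u.1) '' X

/-- There is an undirected walk of length `n` from `v` to `w`. -/
def walkLen {V : Type*} (E : V → V → Prop) (v w : V) (n : ℕ) : Prop :=
  ∃ f : ℕ → V, f 0 = v ∧ f n = w ∧ ∀ i < n, E (f i) (f (i + 1)) ∨ E (f (i + 1)) (f i)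

/-- The undirected graph distance. -/
noncomputable def udist {V : Type*} (E : V → V → Prop) (v w : V) : ℕ∞ :=
  sInf {n : ℕ∞ | ∃ m : ℕ, n = (m : ℕ∞) ∧ walkLen E v w m}

section Aux
variable {V A : Type*} [Fintype A] {E : V → V → Prop} {X : Set (V → A)} {τ : V → V}

lemma mem_gBall_self (E : V → V → Prop) (v : V) (r : ℕ) : v ∈ gBall E v r := by
  induction r with
  | zero => exact rfl
  | succ r ih => exact Or.inl ih

lemma walkLen_symm {v w : V} {n : ℕ} (h : walkLen E v w n) : walkLen E w v n := by
  obtain ⟨f, h0, hn, hstep⟩ := h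
  refine ⟨fun i => f (n - i), by simp [hn], by simp [h0], fun i hi => ?_⟩
  have h1 : n - i = (n - (i+1)) + 1 := by omega
  have := hstep (n - (i+1)) (by omega)
  dsimp only
  rw [h1]
  tauto

lemma walkLen_trans {u v w : V} {m n : ℕ} (h1 : walkLen E u v m) (h2 : walkLen E v w n) :
    walkLen E u w (m + n) := by
  obtain ⟨f, hf0, hfm, hf⟩ := h1
  obtain ⟨g, hg0, hgn, hg⟩ := h2
  refine ⟨fun i => if i ≤ m then f i else g (i - m), by simp [hf0], ?_, fun i hi => ?_⟩
  · rcases Nat.eq_zero_or_pos n with hn0 | hn0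
    · subst hn0
      simp only [Nat.add_zero, if_pos le_rfl, hfm, ← hg0, hgn]
    · have hle : ¬ m + n ≤ m := by omega
      simp only [if_neg hle, Nat.add_sub_cancel_left, hgn]
  · rcases lt_trichotomy i m with h | h | h
    · simp only [if_pos (by omega : i ≤ m), if_pos (by omega : i + 1 ≤ m)]
      exact hf i h
    · subst h
      simp only [if_pos le_rfl, if_neg (by omega : ¬ i + 1 ≤ i)]
      have := hg 0 (by omega)
      simpa [hfm, ← hg0, (by omega : i + 1 - i = 1)] using this
    · simp only [if_neg (by omega : ¬ i ≤ m), if_neg (by omega : ¬ i + 1 ≤ m)]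
      have := hg (i - m) (by omega)
      rw [(by omega : i + 1 - m = (i - m) + 1)]
      exact this

lemma walkLen_map (hiso : ∀ a b : V, E a b ↔ E (τ a) (τ b)) {v w : V} {n : ℕ}
    (h : walkLen E v w n) : walkLen E (τ v) (τ w) n := by
  obtain ⟨f, h0, hn, hstep⟩ := h
  exact ⟨fun i => τ (f i), by simp [h0], by simp [hn],
    fun i hi => by rcases hstep i hi with h | h
                   · exact Or.inl ((hiso _ _).1 h)
                   · exact Or.inr ((hiso _ _).1 h)⟩

lemma walkLen_map_iter (hiso : ∀ a b : V, E a b ↔ E (τ a) (τ b)) {v w : V} {n : ℕ} (k : ℕ)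
    (h : walkLen E v w n) : walkLen E (τ^[k] v) (τ^[k] w) n := by
  induction k with
  | zero => exact h
  | succ k ih => rw [Function.iterate_succ_apply']; rw [Function.iterate_succ_apply']
                 exact walkLen_map hiso ih

lemma mem_gBall_walk {v : V} {r : ℕ} : ∀ {u : V}, u ∈ gBall E v r → ∃ m ≤ r, walkLen E v u m := by
  induction r with
  | zero => exact fun {u} h => ⟨0, le_rfl, fun _ => v, rfl, (Set.mem_singleton_iff.1 h).symm, by omega⟩
  | succ r ih =>
    intro u h
    rcases h with h | ⟨w, hw, hE⟩
    · obtain ⟨m, hm, hwalk⟩ := ih h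
      exact ⟨m, by omega, hwalk⟩
    · obtain ⟨m, hm, hwalk⟩ := ih hw
      have hstep : walkLen E w u 1 := by
        refine ⟨fun i => if i = 0 then w else u, by simp, by simp, fun i hi => ?_⟩
        have : i = 0 := by omega
        simp [this, hE]
      exact ⟨m + 1, by omega, walkLen_trans hwalk hstep⟩

lemma udist_le_of_walk {v w : V} {m : ℕ} (h : walkLen E v w m) : udist E v w ≤ (m : ℕ∞) :=
  sInf_le ⟨m, rfl, h⟩

end Aux
set_option linter.unusedSectionVars false
section Aux2
variable {V A : Type*} [Fintype A] {E : V → V → Prop} {X : Set (V → A)} {τ : V → V}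

lemma restrictSet_finite (X : Set (V → A)) {S : Set V} (hS : S.Finite) :
    (restrictSet X S).Finite := by
  haveI := hS.to_subtype
  exact Set.toFinite _

lemma restrictSet_nonempty (hX : X.Nonempty) (S : Set V) : (restrictSet X S).Nonempty :=
  hX.image _

lemma restrictSet_ncard_pos (hX : X.Nonempty) {S : Set V} (hS : S.Finite) :
    0 < (restrictSet X S).ncard :=
  (Set.ncard_pos (restrictSet_finite X hS)).2 (restrictSet_nonempty hX S)

lemma restrictSet_ncard_mono {S T : Set V} (hST : S ⊆ T) (hT : T.Finite) :
    (restrictSet X S).ncard ≤ (restrictSet X T).ncard := by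
  have heq : restrictSet X S =
      (fun y : T → A => fun u : S => y ⟨u.1, hST u.2⟩) '' restrictSet X T := by
    ext y
    constructor
    · rintro ⟨x, hx, rfl⟩
      exact ⟨fun u : T => x u.1, ⟨x, hx, rfl⟩, rfl⟩
    · rintro ⟨z, ⟨x, hx, rfl⟩, rfl⟩
      exact ⟨x, hx, rfl⟩
  rw [heq]
  exact Set.ncard_image_le (restrictSet_finite X hT)

lemma restrictSet_ncard_tau (hτX : (fun a : V → A => a ∘ τ) '' X = X) {S : Set V}
    (hS : S.Finite) :
    (restrictSet X S).ncard ≤ (restrictSet X (τ '' S)).ncard := by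
  have heq : restrictSet X S =
      (fun y : (τ '' S) → A => fun u : S => y ⟨τ u.1, Set.mem_image_of_mem τ u.2⟩) ''
        restrictSet X (τ '' S) := by
    ext y
    constructor
    · rintro ⟨x, hx, rfl⟩
      rw [← hτX] at hx
      obtain ⟨x', hx', rfl⟩ := hx
      exact ⟨fun u : (τ '' S) => x' u.1, ⟨x', hx', rfl⟩, rfl⟩
    · rintro ⟨z, ⟨x, hx, rfl⟩, rfl⟩
      refine ⟨x ∘ τ, ?_, rfl⟩
      rw [← hτX]
      exact ⟨x, hx, rfl⟩
  rw [heq]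
  exact Set.ncard_image_le (restrictSet_finite X (hS.image τ))

lemma restrictSet_ncard_tau_iter (hτX : (fun a : V → A => a ∘ τ) '' X = X) {S : Set V}
    (hS : S.Finite) (k : ℕ) :
    (restrictSet X S).ncard ≤ (restrictSet X (τ^[k] '' S)).ncard := by
  induction k with
  | zero => rw [Function.iterate_zero, Set.image_id]
  | succ k ih =>
    refine ih.trans ?_
    rw [Function.iterate_succ' , Set.image_comp]
    exact restrictSet_ncard_tau hτX (hS.image _)

end Aux2
set_option linter.unusedSectionVars false
section Aux3
variable {V A : Type*} [Fintype A] {E : V → V → Prop} {X : Set (V → A)} {τ : V → V}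

lemma ncard_prod' {α β : Type*} (s : Set α) (t : Set β) :
    (s ×ˢ t).ncard = s.ncard * t.ncard := by
  rw [← Nat.card_coe_set_eq, ← Nat.card_coe_set_eq, ← Nat.card_coe_set_eq,
    ← Nat.card_prod]
  exact Nat.card_congr (Equiv.Set.prod s t)

lemma restrictSet_ncard_congr {S T : Set V} (h : S = T) :
    (restrictSet X S).ncard = (restrictSet X T).ncard := by subst h; rfl

lemma restrictSet_ncard_insert_le (u : V) (D : Set V) (hD : D.Finite) :
    (restrictSet X (insert u D)).ncard ≤
      (restrictSet X {u}).ncard * (restrictSet X D).ncard := by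
  classical
  have memu : ∀ w : ({u} : Set V), w.1 ∈ insert u D := by
    rintro ⟨w, hw⟩
    rcases hw with rfl
    exact Set.mem_insert _ _
  have memD : ∀ w : D, w.1 ∈ insert u D := fun w => Set.mem_insert_of_mem _ w.2
  set F : (↥(insert u D) → A) → (↥({u} : Set V) → A) × (↥D → A) :=
    fun y => (fun w => y ⟨w.1, memu w⟩, fun w => y ⟨w.1, memD w⟩) with hF
  have hinj : Function.Injective F := by
    intro y y' h
    have h1 := congrArg Prod.fst h
    have h2 := congrArg Prod.snd h
    funext w
    rcases Set.mem_insert_iff.1 w.2 with hw | hw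
    · have := congrFun h1 ⟨w.1, hw⟩
      simpa [hF] using this
    · have := congrFun h2 ⟨w.1, hw⟩
      simpa [hF] using this
  have hsub : F '' restrictSet X (insert u D) ⊆
      (restrictSet X {u}) ×ˢ (restrictSet X D) := by
    rintro - ⟨y, ⟨x, hx, rfl⟩, rfl⟩
    exact ⟨⟨x, hx, rfl⟩, ⟨x, hx, rfl⟩⟩
  have hfinP : ((restrictSet X {u}) ×ˢ (restrictSet X D)).Finite := by
    haveI := (Set.finite_singleton u).to_subtype
    haveI := hD.to_subtype
    exact Set.toFinite _
  calc (restrictSet X (insert u D)).ncard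
      = (F '' restrictSet X (insert u D)).ncard :=
        (Set.ncard_image_of_injective _ hinj).symm
    _ ≤ ((restrictSet X {u}) ×ˢ (restrictSet X D)).ncard :=
        Set.ncard_le_ncard hsub hfinP
    _ = (restrictSet X {u}).ncard * (restrictSet X D).ncard := ncard_prod' _ _

lemma restrictSet_ncard_empty (hX : X.Nonempty) {S : Set V} (h : S = ∅) :
    (restrictSet X S).ncard = 1 := by
  subst h
  rw [Set.ncard_eq_one]
  obtain ⟨x, hx⟩ := hX
  refine ⟨fun u => x u.1, ?_⟩
  apply Set.eq_singleton_iff_unique_mem.2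
  refine ⟨⟨x, hx, rfl⟩, ?_⟩
  rintro - ⟨x', hx', rfl⟩
  funext w
  exact absurd w.2 (Set.notMem_empty _)

lemma restrictSet_logb_le_sum (hX : X.Nonempty) (D : Finset V) :
    Real.logb 2 ((restrictSet X (D : Set V)).ncard) ≤
      ∑ u ∈ D, Real.logb 2 ((restrictSet X ({u} : Set V)).ncard) := by
  classical
  induction D using Finset.induction_on with
  | empty =>
    have h1 : (restrictSet X ((∅ : Finset V) : Set V)).ncard = 1 := by
      rw [restrictSet_ncard_congr (Finset.coe_empty)]
      exact restrictSet_ncard_empty hX rfl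
    rw [h1]
    simp
  | insert a s hu ih =>
    rw [Finset.sum_insert hu,
      restrictSet_ncard_congr (X := X) (Finset.coe_insert a s)]
    have h1 := restrictSet_ncard_insert_le (X := X) a (s : Set V) s.finite_toSet
    have hposa := restrictSet_ncard_pos hX (Set.finite_singleton a)
    have hposs := restrictSet_ncard_pos hX s.finite_toSet
    have hposins := restrictSet_ncard_pos hX ((s.finite_toSet).insert a)
    calc Real.logb 2 ((restrictSet X (insert a (s : Set V))).ncard)
        ≤ Real.logb 2 (((restrictSet X ({a} : Set V)).ncard : ℝ) *
            ((restrictSet X (s : Set V)).ncard : ℝ)) := by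
          apply Real.logb_le_logb_of_le one_lt_two
          · exact_mod_cast hposins
          · exact_mod_cast h1
      _ = Real.logb 2 ((restrictSet X ({a} : Set V)).ncard) +
            Real.logb 2 ((restrictSet X (s : Set V)).ncard) := by
          rw [Real.logb_mul (by positivity) (by positivity)]
      _ ≤ Real.logb 2 ((restrictSet X ({a} : Set V)).ncard) +
            ∑ u ∈ s, Real.logb 2 ((restrictSet X ({u} : Set V)).ncard) := by
          linarith [ih]
end Aux3
section Aux4
variable {V A : Type*} [Fintype A] {E : V → V → Prop} {X : Set (V → A)}

lemma WI_singletons {ε : ℝ}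
    (hWI' : ∀ (N : ℕ) (ctr : Fin N → V) (rad : Fin N → ℕ),
      (Pairwise fun i j => Disjoint (gBall E (ctr i) (rad i)) (gBall E (ctr j) (rad j))) →
      ε * ∑ i, Real.logb 2 ((restrictSet X (gBall E (ctr i) (rad i))).ncard) ≤
        Real.logb 2 ((restrictSet X (⋃ i, gBall E (ctr i) (rad i))).ncard))
    (D : Finset V) :
    ε * ∑ u ∈ D, Real.logb 2 ((restrictSet X ({u} : Set V)).ncard) ≤
      Real.logb 2 ((restrictSet X (D : Set V)).ncard) := by
  classical
  set e := D.equivFin with he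
  set ctr : Fin D.card → V := fun i => (e.symm i : V) with hctr
  have hctrinj : Function.Injective ctr := fun i j h =>
    e.symm.injective (Subtype.val_injective h)
  have hpair : Pairwise fun i j : Fin D.card =>
      Disjoint (gBall E (ctr i) 0) (gBall E (ctr j) 0) := by
    intro i j hij
    have hne : ctr i ≠ ctr j := fun h => hij (hctrinj h)
    show Disjoint ({ctr i} : Set V) ({ctr j} : Set V)
    exact Set.disjoint_singleton.2 hne
  have hU : (⋃ i, gBall E (ctr i) 0) = (D : Set V) := by
    ext x
    simp only [Set.mem_iUnion]
    constructor
    · rintro ⟨i, hi⟩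
      rcases hi with rfl
      exact (e.symm i).2
    · intro hx
      refine ⟨e ⟨x, hx⟩, ?_⟩
      show x ∈ ({ctr (e ⟨x, hx⟩)} : Set V)
      simp [hctr]
  have hsum : ∑ i : Fin D.card, Real.logb 2 ((restrictSet X (gBall E (ctr i) 0)).ncard) =
      ∑ u ∈ D, Real.logb 2 ((restrictSet X ({u} : Set V)).ncard) := by
    rw [← Finset.sum_attach D (fun u => Real.logb 2 ((restrictSet X ({u} : Set V)).ncard))]
    exact Equiv.sum_comp e.symm (fun u : ↥D => Real.logb 2 ((restrictSet X ({u.1} : Set V)).ncard))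
  have := hWI' D.card ctr (fun _ => 0) hpair
  rw [hsum] at this
  rwa [restrictSet_ncard_congr (X := X) hU] at this
end Aux4


set_option maxHeartbeats 1000000 in
/-- If `X ⊆ A^V` has weak independence, some vertex `v` has superlinear connectivity and
positive upper entropy, and `τ` is a moving subsymmetry of `X`, then the upper
`τ`-entropy `h̄(X,τ) = sup_F limsup_N (1/N) log₂|X_{⋃_{n≤N} τⁿ(F)}|` is infinite. -/
theorem tau_entropy_infinite {V A : Type*} [Fintype A]
    [TopologicalSpace A] [DiscreteTopology A]
    (E : V → V → Prop) (hfin : ∀ (v : V) (r : ℕ), (gBall E v r).Finite)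
    (X : Set (V → A)) (hX : IsClosed X)
    (hWI : ∃ ε > (0 : ℝ), ∀ (N : ℕ) (ctr : Fin N → V) (rad : Fin N → ℕ),
      (Pairwise fun i j => Disjoint (gBall E (ctr i) (rad i)) (gBall E (ctr j) (rad j))) →
      ε * ∑ i, Real.logb 2 ((restrictSet X (gBall E (ctr i) (rad i))).ncard) ≤
        Real.logb 2 ((restrictSet X (⋃ i, gBall E (ctr i) (rad i))).ncard))
    (v : V)
    (hsuper : Filter.Tendsto (fun r : ℕ => ((gBall E v r).ncard : ℝ) / r)
      Filter.atTop Filter.atTop)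
    (hent : 0 < Filter.limsup (fun r : ℕ =>
      ((Real.logb 2 ((restrictSet X (gBall E v r)).ncard) / ((gBall E v r).ncard : ℝ)
        : ℝ) : EReal)) Filter.atTop)
    (τ : V → V) (hinj : Function.Injective τ)
    (hiso : ∀ a b : V, E a b ↔ E (τ a) (τ b))
    (hτX : (fun a : V → A => a ∘ τ) '' X = X)
    (hmoving : ∀ u : V, ∃ S : ℝ≥0∞, 0 < S ∧
      Filter.Tendsto (fun n : ℕ => ((udist E u (τ^[n] u) : ℝ≥0∞) / n))
        Filter.atTop (nhds S)) :
    (⨆ F : Finset V, Filter.limsup (fun N : ℕ =>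
        (((1 : ℝ) / N * Real.logb 2
          ((restrictSet X (⋃ n ∈ Finset.range (N + 1), τ^[n] '' (F : Set V))).ncard)
            : ℝ) : EReal)) Filter.atTop) = (⊤ : EReal) := by
  classical
  obtain ⟨ε, hε, hWI'⟩ := hWI
  -- X is nonempty
  have hXne : X.Nonempty := by
    rcases X.eq_empty_or_nonempty with h | h
    · exfalso
      have hzero : (fun r : ℕ =>
          ((Real.logb 2 ((restrictSet X (gBall E v r)).ncard) / ((gBall E v r).ncard : ℝ)
            : ℝ) : EReal)) = fun _ : ℕ => (0 : EReal) := by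
        funext r
        have : restrictSet X (gBall E v r) = ∅ := by
          rw [h]; simp [restrictSet]
        rw [this]
        simp
      rw [hzero, Filter.limsup_const] at hent
      exact lt_irrefl _ hent
    · exact h
  -- extract an entropy constant c
  obtain ⟨c, hc0, hclt⟩ : ∃ c : ℝ, 0 < c ∧ (c : EReal) < Filter.limsup (fun r : ℕ =>
      ((Real.logb 2 ((restrictSet X (gBall E v r)).ncard) / ((gBall E v r).ncard : ℝ)
        : ℝ) : EReal)) Filter.atTop := by
    rcases EReal.lt_iff_exists_real_btwn.1 hent with ⟨x, hx0, hxlt⟩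
    exact ⟨x, by exact_mod_cast hx0, hxlt⟩
  have hfreq : ∃ᶠ r in Filter.atTop, (c : EReal) <
      ((Real.logb 2 ((restrictSet X (gBall E v r)).ncard) / ((gBall E v r).ncard : ℝ)
        : ℝ) : EReal) :=
    Filter.frequently_lt_of_lt_limsup (⟨⊥, fun _ _ => bot_le⟩) hclt
  -- the speed at v
  obtain ⟨S, hSpos, hlim⟩ := hmoving v
  set t : ℝ≥0∞ := min S 1 / 2 with ht
  have htne0 : min S 1 ≠ 0 := (lt_min hSpos zero_lt_one).ne'
  have htnetop : min S 1 ≠ ⊤ := (lt_of_le_of_lt (min_le_right S 1) ENNReal.one_lt_top).ne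
  have htpos : 0 < t := ENNReal.div_pos htne0 (by norm_num)
  have htltS : t < S := lt_of_lt_of_le (ENNReal.half_lt_self htne0 htnetop) (min_le_left S 1)
  have htnetop' : t ≠ ⊤ := by
    refine ne_of_lt (lt_of_le_of_lt ?_ ENNReal.one_lt_top)
    calc t ≤ min S 1 := le_of_lt (ENNReal.half_lt_self htne0 htnetop)
      _ ≤ 1 := min_le_right S 1
  set s : NNReal := t.toNNReal with hs
  have hscoe : (s : ℝ≥0∞) = t := ENNReal.coe_toNNReal htnetop'
  have hspos : 0 < s := by
    rw [← ENNReal.coe_pos, hscoe]; exact htpos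
  have hsposR : 0 < (s : ℝ) := hspos
  obtain ⟨n₀, hn₀⟩ : ∃ n₀ : ℕ, ∀ n ≥ n₀, t < (udist E v (τ^[n] v) : ℝ≥0∞) / n := by
    have := hlim.eventually (Ioi_mem_nhds htltS)
    exact Filter.eventually_atTop.1 this
  -- the constants
  rw [iSup_eq_top]
  intro b hb
  obtain ⟨M₀, hbM, -⟩ := EReal.lt_iff_exists_real_btwn.1 hb
  set M : ℝ := max M₀ 1 with hM
  have hM1 : 1 ≤ M := le_max_right _ _
  have hMpos : 0 < M := lt_of_lt_of_le one_pos hM1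
  set G : ℝ := (n₀ : ℝ) + 2 + 3 / (s : ℝ) with hG
  have hGpos : 0 < G := by positivity
  set C : ℝ := M * G / (ε * c) with hC
  have hCpos : 0 < C := by positivity
  -- choose the radius r
  obtain ⟨r, hr_ent, hrC, hr1⟩ :=
    (hfreq.and_eventually ((hsuper.eventually_ge_atTop C).and
      (Filter.eventually_ge_atTop 1))).exists
  have hr1R : (1 : ℝ) ≤ (r : ℝ) := by exact_mod_cast hr1
  have hBpos : 0 < (gBall E v r).ncard := (Set.ncard_pos (hfin v r)).2 ⟨v, mem_gBall_self E v r⟩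
  have hBposR : 0 < ((gBall E v r).ncard : ℝ) := by exact_mod_cast hBpos
  set bR : ℝ := ((gBall E v r).ncard : ℝ) with hbR
  have hent_r : c * bR ≤ Real.logb 2 ((restrictSet X (gBall E v r)).ncard) := by
    have : c < Real.logb 2 ((restrictSet X (gBall E v r)).ncard) / bR := by
      exact_mod_cast hr_ent
    have := (lt_div_iff₀ hBposR).1 this
    linarith
  have hbC : C * r ≤ bR := by
    exact (le_div_iff₀ (lt_of_lt_of_le one_pos hr1R)).1 hrC
  -- the gap g
  set g : ℕ := n₀ + 1 + ⌈(2 * (r : ℝ) + 1) / (s : ℝ)⌉₊ with hg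
  have hgpos : 0 < g := by omega
  have hgG : (g : ℝ) ≤ G * r := by
    have hceil : (⌈(2 * (r : ℝ) + 1) / (s : ℝ)⌉₊ : ℝ) < (2 * (r : ℝ) + 1) / (s : ℝ) + 1 :=
      Nat.ceil_lt_add_one (by positivity)
    have hdiv : (2 * (r : ℝ) + 1) / (s : ℝ) ≤ 3 * (r : ℝ) / (s : ℝ) := by
      gcongr
      linarith
    have hgR : (g : ℝ) = (n₀ : ℝ) + 1 + (⌈(2 * (r : ℝ) + 1) / (s : ℝ)⌉₊ : ℝ) := by
      rw [hg]; push_cast; ring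
    have hGr : G * r = ((n₀ : ℝ) + 2) * r + 3 * (r : ℝ) / (s : ℝ) := by
      rw [hG]; ring
    have hmul : ((n₀ : ℝ) + 2) * 1 ≤ ((n₀ : ℝ) + 2) * r :=
      mul_le_mul_of_nonneg_left hr1R (by positivity)
    rw [hgR, hGr]
    linarith
  -- distance bound: the key geometric fact
  have hkey : ∀ m : ℕ, g ≤ m → (2 * r : ℝ≥0∞) < (udist E v (τ^[m] v) : ℝ≥0∞) := by
    intro m hm
    have hmn₀ : n₀ ≤ m := by omega
    have hmpos : 0 < m := by omega
    have h1 : t < (udist E v (τ^[m] v) : ℝ≥0∞) / m := hn₀ m hmn₀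
    have h2 : t * m < (udist E v (τ^[m] v) : ℝ≥0∞) := by
      rw [ENNReal.lt_div_iff_mul_lt (Or.inl (by exact_mod_cast (by omega : m ≠ 0)))
        (Or.inl (ENNReal.natCast_ne_top m))] at h1
      exact h1
    refine lt_of_le_of_lt ?_ h2
    -- 2r ≤ t * m since t*g ≥ 2r+1 > 2r and m ≥ g
    have hsg : (2 * (r : ℝ) + 1) ≤ (s : ℝ) * g := by
      have hle : (2 * (r : ℝ) + 1) / (s : ℝ) ≤ (⌈(2 * (r : ℝ) + 1) / (s : ℝ)⌉₊ : ℝ) :=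
        Nat.le_ceil _
      have : (2 * (r : ℝ) + 1) / (s : ℝ) ≤ (g : ℝ) := by
        refine hle.trans ?_
        exact Nat.cast_le.2 (Nat.le_add_left _ _)
      calc 2 * (r : ℝ) + 1 = ((2 * (r : ℝ) + 1) / (s : ℝ)) * s := by field_simp
        _ ≤ (g : ℝ) * s := by
            apply mul_le_mul_of_nonneg_right this (le_of_lt hsposR)
        _ = (s : ℝ) * g := by ring
    -- convert to ℝ≥0∞
    have hsg' : (2 * r : ℝ≥0∞) ≤ (s : ℝ≥0∞) * g := by
      have h2r : 2 * (r : ℝ) ≤ (s : ℝ) * g := by linarith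
      have := ENNReal.ofReal_le_ofReal h2r
      rwa [show (2 : ℝ) * (r : ℝ) = ((2 * r : ℕ) : ℝ) by push_cast; ring,
        ENNReal.ofReal_natCast, ENNReal.ofReal_mul (by positivity),
        ENNReal.ofReal_coe_nnreal, ENNReal.ofReal_natCast,
        show ((2 * r : ℕ) : ℝ≥0∞) = 2 * (r : ℝ≥0∞) by push_cast; ring] at this
    calc (2 * r : ℝ≥0∞) ≤ (s : ℝ≥0∞) * g := hsg'
      _ = t * g := by rw [hscoe]
      _ ≤ t * m := by
          apply mul_le_mul_right ?_ t
          exact_mod_cast hm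
  -- the translated balls
  set Bf : Finset V := (hfin v r).toFinset with hBf
  have hBfcoe : (Bf : Set V) = gBall E v r := Set.Finite.coe_toFinset _
  have hdisj2 : ∀ k k' : ℕ, k < k' →
      Disjoint (Bf.image (τ^[k * g])) (Bf.image (τ^[k' * g])) := by
    intro k k' hkk'
    rw [Finset.disjoint_left]
    rintro a ha ha'
    obtain ⟨x, hx, hxa⟩ := Finset.mem_image.1 ha
    obtain ⟨y, hy, hya⟩ := Finset.mem_image.1 ha'
    set m : ℕ := (k' - k) * g with hm
    have hgm : g ≤ m := by
      calc g = 1 * g := (one_mul g).symm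
        _ ≤ (k' - k) * g := Nat.mul_le_mul_right g (by omega)
    have hiter : τ^[k' * g] y = τ^[k * g] (τ^[m] y) := by
      rw [← Function.iterate_add_apply]
      congr 1
      have : k * g + (k' - k) * g = k' * g := by
        rw [← Nat.add_mul]; congr 1; omega
      rw [hm, this]
    have hxy : x = τ^[m] y := by
      apply Function.Injective.iterate hinj (k * g)
      rw [hxa, ← hya, hiter]
    have hxball : x ∈ gBall E v r := by rw [← hBfcoe]; exact hx
    have hyball : y ∈ gBall E v r := by rw [← hBfcoe]; exact hy
    obtain ⟨m₁, hm₁, w₁⟩ := mem_gBall_walk hxball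
    obtain ⟨m₂, hm₂, w₂⟩ := mem_gBall_walk hyball
    have w₂' : walkLen E (τ^[m] y) (τ^[m] v) m₂ :=
      walkLen_map_iter hiso m (walkLen_symm w₂)
    have wfull : walkLen E v (τ^[m] v) (m₁ + m₂) := by
      rw [hxy] at w₁
      exact walkLen_trans w₁ w₂'
    have hud : udist E v (τ^[m] v) ≤ ((m₁ + m₂ : ℕ) : ℕ∞) := udist_le_of_walk wfull
    have hle2r : (udist E v (τ^[m] v) : ℝ≥0∞) ≤ (2 * r : ℝ≥0∞) := by
      calc (udist E v (τ^[m] v) : ℝ≥0∞) ≤ (((m₁ + m₂ : ℕ) : ℕ∞) : ℝ≥0∞) :=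
            ENat.toENNReal_le.2 hud
        _ = ((m₁ + m₂ : ℕ) : ℝ≥0∞) := by simp
        _ ≤ ((2 * r : ℕ) : ℝ≥0∞) := by exact_mod_cast (by omega : m₁ + m₂ ≤ 2 * r)
        _ = (2 * r : ℝ≥0∞) := by push_cast; ring
    exact absurd hle2r (not_le_of_gt (hkey m hgm))
  -- the core estimate for each N ≥ 1
  have hcore : ∀ N : ℕ, 1 ≤ N → (M : EReal) ≤
      (((1 : ℝ) / N * Real.logb 2
        ((restrictSet X (⋃ n ∈ Finset.range (N + 1), τ^[n] '' (Bf : Set V))).ncard)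
          : ℝ) : EReal) := by
    intro N hN
    rw [EReal.coe_le_coe_iff]
    set K : ℕ := N / g with hK
    set D : Finset V := (Finset.range (K + 1)).biUnion (fun k => Bf.image (τ^[k * g])) with hD
    set T : Set V := ⋃ n ∈ Finset.range (N + 1), τ^[n] '' (Bf : Set V) with hT
    have hTfin : T.Finite := by
      rw [hT]
      apply Set.Finite.biUnion (Finset.range (N + 1)).finite_toSet
      exact fun n _ => Bf.finite_toSet.image _
    have hDT : (D : Set V) ⊆ T := by
      intro a ha
      simp only [Finset.mem_coe, hD, Finset.mem_biUnion, Finset.mem_range] at ha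
      obtain ⟨k, hk, hak⟩ := ha
      have hkg : k * g ≤ N := by
        calc k * g ≤ K * g := Nat.mul_le_mul_right g (by omega)
          _ ≤ N := Nat.div_mul_le_self N g
      obtain ⟨x, hx, rfl⟩ := Finset.mem_image.1 hak
      rw [hT]
      simp only [Set.mem_iUnion, Finset.mem_range]
      exact ⟨k * g, by omega, ⟨x, hx, rfl⟩⟩
    have hWID := WI_singletons hWI' D
    have hpairwise : (↑(Finset.range (K + 1)) : Set ℕ).PairwiseDisjoint
        (fun k => Bf.image (τ^[k * g])) := by
      intro k _ k' _ hkk'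
      rcases lt_or_gt_of_ne hkk' with h | h
      · exact hdisj2 k k' h
      · exact (hdisj2 k' k h).symm
    have hsumD : ∑ u ∈ D, Real.logb 2 ((restrictSet X ({u} : Set V)).ncard) =
        ∑ k ∈ Finset.range (K + 1), ∑ u ∈ Bf.image (τ^[k * g]),
          Real.logb 2 ((restrictSet X ({u} : Set V)).ncard) :=
      Finset.sum_biUnion hpairwise
    have hinner : ∀ k : ℕ, c * bR ≤ ∑ u ∈ Bf.image (τ^[k * g]),
        Real.logb 2 ((restrictSet X ({u} : Set V)).ncard) := by
      intro k
      refine le_trans ?_ (restrictSet_logb_le_sum hXne (Bf.image (τ^[k * g])))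
      refine hent_r.trans ?_
      apply Real.logb_le_logb_of_le one_lt_two
      · exact_mod_cast restrictSet_ncard_pos hXne (hfin v r)
      · have h1 := restrictSet_ncard_tau_iter (X := X) hτX (hfin v r) (k * g)
        have h2 : (restrictSet X (τ^[k * g] '' gBall E v r)).ncard =
            (restrictSet X ((Bf.image (τ^[k * g]) : Finset V) : Set V)).ncard :=
          restrictSet_ncard_congr (by rw [Finset.coe_image, hBfcoe])
        exact_mod_cast h2 ▸ h1
    have hsum_lower : ((K : ℝ) + 1) * (c * bR) ≤
        ∑ u ∈ D, Real.logb 2 ((restrictSet X ({u} : Set V)).ncard) := by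
      rw [hsumD]
      calc ((K : ℝ) + 1) * (c * bR) = ∑ _k ∈ Finset.range (K + 1), (c * bR) := by
            rw [Finset.sum_const, Finset.card_range]; push_cast; ring
        _ ≤ _ := Finset.sum_le_sum (fun k _ => hinner k)
    have hDval : Real.logb 2 ((restrictSet X (D : Set V)).ncard) ≤
        Real.logb 2 ((restrictSet X T).ncard) := by
      apply Real.logb_le_logb_of_le one_lt_two
      · exact_mod_cast restrictSet_ncard_pos hXne D.finite_toSet
      · exact_mod_cast restrictSet_ncard_mono hDT hTfin
    have hNg : (N : ℝ) ≤ ((K : ℝ) + 1) * g := by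
      have h2 := Nat.div_add_mod N g
      have h3 := Nat.mod_lt N hgpos
      have h1 : N < (K + 1) * g := by
        calc N = g * K + N % g := by rw [hK]; exact (Nat.div_add_mod N g).symm
          _ < g * K + g := by omega
          _ = (K + 1) * g := by ring
      exact_mod_cast le_of_lt h1
    have hεcC : ε * c * C = M * G := by
      rw [hC]
      field_simp
    have hfinal : M * N ≤ Real.logb 2 ((restrictSet X T).ncard) := by
      have hKpos : (0 : ℝ) ≤ (K : ℝ) + 1 := by positivity
      calc M * N ≤ M * (((K : ℝ) + 1) * g) :=
            mul_le_mul_of_nonneg_left hNg (le_of_lt hMpos)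
        _ ≤ M * (((K : ℝ) + 1) * (G * r)) :=
            mul_le_mul_of_nonneg_left
              (mul_le_mul_of_nonneg_left hgG hKpos) (le_of_lt hMpos)
        _ = ((K : ℝ) + 1) * (M * G) * r := by ring
        _ = ((K : ℝ) + 1) * (ε * c * C) * r := by rw [hεcC]
        _ = ε * (((K : ℝ) + 1) * (c * (C * r))) := by ring
        _ ≤ ε * (((K : ℝ) + 1) * (c * bR)) :=
            mul_le_mul_of_nonneg_left
              (mul_le_mul_of_nonneg_left
                (mul_le_mul_of_nonneg_left hbC (le_of_lt hc0)) hKpos) (le_of_lt hε)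
        _ ≤ ε * ∑ u ∈ D, Real.logb 2 ((restrictSet X ({u} : Set V)).ncard) :=
            mul_le_mul_of_nonneg_left hsum_lower (le_of_lt hε)
        _ ≤ Real.logb 2 ((restrictSet X (D : Set V)).ncard) := hWID
        _ ≤ Real.logb 2 ((restrictSet X T).ncard) := hDval
    have hNposR : (0 : ℝ) < N := by exact_mod_cast hN
    rw [show (1 : ℝ) / N * Real.logb 2 ((restrictSet X T).ncard) =
      Real.logb 2 ((restrictSet X T).ncard) / N by ring]
    exact (le_div_iff₀ hNposR).2 hfinal
  have hMle : (M : EReal) ≤ Filter.limsup (fun N : ℕ =>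
      (((1 : ℝ) / N * Real.logb 2
        ((restrictSet X (⋃ n ∈ Finset.range (N + 1), τ^[n] '' (Bf : Set V))).ncard)
          : ℝ) : EReal)) Filter.atTop :=
    Filter.le_limsup_of_frequently_le
      (((Filter.eventually_ge_atTop 1).mono hcore).frequently)
      (Filter.isBoundedUnder_of ⟨⊤, fun _ => le_top⟩)
  exact ⟨Bf, lt_of_lt_of_le
    (hbM.trans_le (EReal.coe_le_coe_iff.2 (le_max_left M₀ 1))) hMle⟩
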